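/- For every integer n ≥ 1, one has λ₀(n) > 1. -/

import Mathlib

open Real Filter

noncomputable def b (n : ℕ) (j : ℕ) : ℝ :=
  ∏ ℓ ∈ Finset.Icc 1 j, 1 / (2 * (ℓ : ℝ) * ((n : ℝ) + 2 * ((ℓ : ℝ) - 1)))

noncomputable def phi0 (n : ℕ) (ρ : ℝ) : ℝ := ∑' j : ℕ, b n j * ρ ^ (2 * j)

lemma b_zero (n : ℕ) : b n 0 = 1 := by simp [b]

lemma b_succ (n j : ℕ) :
    b n (j + 1) = b n j * (1 / (2 * ((j : ℝ) + 1) * ((n : ℝ) + 2 * (j : ℝ)))) := by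
  rw [b, b, Finset.prod_Icc_succ_top (Nat.le_add_left 1 j)]
  push_cast
  ring

lemma b_pos {n : ℕ} (hn : 1 ≤ n) (j : ℕ) : 0 < b n j := by
  induction j with
  | zero => simp [b_zero]
  | succ j ih =>
      rw [b_succ]
      have hn' : (1 : ℝ) ≤ (n : ℝ) := by exact_mod_cast hn
      have hj : (0 : ℝ) ≤ (j : ℝ) := Nat.cast_nonneg j
      have : 0 < 2 * ((j : ℝ) + 1) * ((n : ℝ) + 2 * (j : ℝ)) := by nlinarith
      positivity

lemma b_le {n : ℕ} (hn : 1 ≤ n) (j : ℕ) : b n j ≤ 1 / (2 ^ j * (Nat.factorial j : ℝ)) := by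
  have hn' : (1 : ℝ) ≤ (n : ℝ) := by exact_mod_cast hn
  induction j with
  | zero => simp [b_zero]
  | succ j ih =>
      rw [b_succ]
      have hj : (0 : ℝ) ≤ (j : ℝ) := Nat.cast_nonneg j
      have hbp := (b_pos hn j).le
      have hfac : (Nat.factorial (j+1) : ℝ) = ((j : ℝ) + 1) * (Nat.factorial j : ℝ) := by
        rw [Nat.factorial_succ]; push_cast; ring
      have hfp : (0 : ℝ) < (Nat.factorial j : ℝ) := by positivity
      have h1 : 1 / (2 * ((j : ℝ) + 1) * ((n : ℝ) + 2 * (j : ℝ))) ≤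
          1 / (2 * ((j : ℝ) + 1)) := by
        apply div_le_div_of_nonneg_left (by norm_num) (by nlinarith)
        nlinarith
      calc b n j * (1 / (2 * ((j : ℝ) + 1) * ((n : ℝ) + 2 * (j : ℝ))))
          ≤ (1 / (2 ^ j * (Nat.factorial j : ℝ))) * (1 / (2 * ((j : ℝ) + 1))) :=
            mul_le_mul ih h1 (by positivity) (by positivity)
        _ = 1 / (2 ^ (j + 1) * (Nat.factorial (j+1) : ℝ)) := by
            rw [hfac, pow_succ]; field_simp

/-- Key estimate: `(2j+1) b_{j+1} ≤ (1/2)(1/4)^j`. -/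
lemma b_key {n : ℕ} (hn : 1 ≤ n) (j : ℕ) :
    (2 * (j : ℝ) + 1) * b n (j + 1) ≤ (1 / 2) * (1 / 4) ^ j := by
  have hn' : (1 : ℝ) ≤ (n : ℝ) := by exact_mod_cast hn
  induction j with
  | zero =>
      have h := b_le hn 1
      have h1 : (Nat.factorial 1 : ℝ) = 1 := by norm_num [Nat.factorial]
      rw [h1] at h
      norm_num at h ⊢
      linarith
  | succ j ih =>
      have hj : (0 : ℝ) ≤ (j : ℝ) := Nat.cast_nonneg j
      have hbp := (b_pos hn (j + 1)).le
      rw [b_succ n (j + 1)]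
      push_cast
      have hy : (0 : ℝ) ≤ (1 / 4 : ℝ) ^ j := by positivity
      have hden : (0 : ℝ) < 2 * (((j : ℝ) + 1) + 1) * ((n : ℝ) + 2 * ((j : ℝ) + 1)) := by
        nlinarith
      rw [pow_succ]
      rw [mul_one_div, ← mul_div_assoc, div_le_iff₀ hden]
      nlinarith [ih, mul_nonneg hy hj, mul_nonneg (mul_nonneg hy hj) hj,
        mul_nonneg hy (sub_nonneg.2 hn'), mul_nonneg (mul_nonneg hy hj) (sub_nonneg.2 hn')]

lemma two_mul_le_two_pow (j : ℕ) : (2 * j : ℕ) ≤ 2 ^ (j + 1) := by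
  have := j.lt_two_pow_self
  rw [pow_succ]
  omega

/-- `λ₀(n) > 1`: any positive root of `λ φ₀'(λ) = φ₀(λ)` exceeds `1`. -/
theorem stmt5 (n : ℕ) (hn : 1 ≤ n) (l : ℝ) (hl : 0 < l)
    (heq : l * deriv (phi0 n) l = phi0 n l) :
    1 < l := by
  by_contra hle
  push_neg at hle
  set u : ℕ → ℝ := fun j => 2 * ((4 : ℝ) ^ j / (Nat.factorial j : ℝ)) with hu_def
  have hu : Summable u := (Real.summable_pow_div_factorial 4).mul_left 2
  have hb_le : ∀ j, b n j ≤ 1 / (2 ^ j * (Nat.factorial j : ℝ)) := b_le hn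
  have hb_pos : ∀ j, 0 < b n j := b_pos hn
  -- bound on derivatives on Ioo (-2) 2
  have hbound : ∀ j : ℕ, ∀ y ∈ Set.Ioo (-2 : ℝ) 2,
      ‖b n j * ((2 * j : ℕ) * y ^ (2 * j - 1))‖ ≤ u j := by
    intro j y hy
    have hyabs : |y| ≤ 2 := by
      rw [abs_le]; constructor <;> [linarith [hy.1]; linarith [hy.2]]
    have hfp : (0 : ℝ) < (Nat.factorial j : ℝ) := by positivity
    have h1 : ‖b n j * ((2 * j : ℕ) * y ^ (2 * j - 1))‖
        ≤ b n j * ((2 * j : ℕ) * 2 ^ (2 * j - 1)) := by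
      rw [Real.norm_eq_abs, abs_mul, abs_of_pos (hb_pos j), abs_mul, abs_pow, Nat.abs_cast]
      have : |y| ^ (2 * j - 1) ≤ 2 ^ (2 * j - 1) :=
        pow_le_pow_left₀ (abs_nonneg y) hyabs _
      exact mul_le_mul_of_nonneg_left
        (mul_le_mul_of_nonneg_left this (Nat.cast_nonneg _)) (hb_pos j).le
    refine h1.trans ?_
    have h3 : ((2 * j : ℕ) : ℝ) * 2 ^ (2 * j - 1) ≤ 2 ^ (j + 1) * 4 ^ j := by
      have ha : ((2 * j : ℕ) : ℝ) ≤ 2 ^ (j + 1) := by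
        calc ((2 * j : ℕ) : ℝ) ≤ ((2 ^ (j + 1) : ℕ) : ℝ) := by
              exact_mod_cast two_mul_le_two_pow j
          _ = (2 : ℝ) ^ (j + 1) := by push_cast; ring
      have hb' : (2 : ℝ) ^ (2 * j - 1) ≤ 4 ^ j := by
        calc (2 : ℝ) ^ (2 * j - 1) ≤ 2 ^ (2 * j) :=
              pow_le_pow_right₀ (by norm_num) (Nat.sub_le _ _)
          _ = 4 ^ j := by rw [pow_mul]; norm_num
      exact mul_le_mul ha hb' (by positivity) (by positivity)
    calc b n j * (((2 * j : ℕ) : ℝ) * 2 ^ (2 * j - 1))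
        ≤ (1 / (2 ^ j * (Nat.factorial j : ℝ))) * (2 ^ (j + 1) * 4 ^ j) :=
          mul_le_mul (hb_le j) h3 (by positivity) (by positivity)
      _ = u j := by rw [hu_def]; simp only []; rw [pow_succ]; field_simp
  -- differentiability of each term
  have hg : ∀ j : ℕ, ∀ y : ℝ,
      HasDerivAt (fun x : ℝ => b n j * x ^ (2 * j))
        (b n j * ((2 * j : ℕ) * y ^ (2 * j - 1))) y := fun j y =>
    (hasDerivAt_pow (2 * j) y).const_mul (b n j)
  -- summability at 0
  have hg0 : Summable (fun j : ℕ => b n j * (0 : ℝ) ^ (2 * j)) := by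
    apply summable_of_ne_finset_zero (s := {0})
    intro j hj
    simp only [Finset.mem_singleton] at hj
    rw [zero_pow (by omega)]
    ring
  have hmem : l ∈ Set.Ioo (-2 : ℝ) 2 := ⟨by linarith, by linarith⟩
  have hmem0 : (0 : ℝ) ∈ Set.Ioo (-2 : ℝ) 2 := by norm_num
  have hd : HasDerivAt (phi0 n)
      (∑' j : ℕ, b n j * ((2 * j : ℕ) * l ^ (2 * j - 1))) l := by
    exact hasDerivAt_tsum_of_isPreconnected hu isOpen_Ioo (convex_Ioo _ _).isPreconnected
      (fun j y _ => hg j y) hbound hmem0 hg0 hmem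
  rw [hd.deriv] at heq
  -- rewrite l * derivative as a single tsum
  have hA : ∀ j : ℕ, l * (b n j * ((2 * j : ℕ) * l ^ (2 * j - 1)))
      = (2 * (j : ℝ)) * b n j * l ^ (2 * j) := by
    intro j
    cases j with
    | zero => simp
    | succ j =>
        have e1 : 2 * (j + 1) - 1 = 2 * j + 1 := by omega
        have e2 : 2 * (j + 1) = (2 * j + 1) + 1 := by omega
        rw [e1, e2, pow_succ]
        push_cast
        ring
  -- summability of the two series at l
  have hl2 : ∀ j : ℕ, l ^ (2 * j) ≤ 1 := fun j => pow_le_one₀ hl.le hle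
  have hl2' : ∀ j : ℕ, 0 < l ^ (2 * j) := fun j => pow_pos hl _
  have hBle : ∀ j : ℕ, b n j * l ^ (2 * j) ≤ u j := by
    intro j
    have hfp : (0 : ℝ) < (Nat.factorial j : ℝ) := by positivity
    calc b n j * l ^ (2 * j) ≤ b n j * 1 :=
          mul_le_mul_of_nonneg_left (hl2 j) (hb_pos j).le
      _ = b n j := mul_one _
      _ ≤ 1 / (2 ^ j * (Nat.factorial j : ℝ)) := hb_le j
      _ ≤ u j := by
          rw [hu_def]; simp only []
          rw [div_le_iff₀ (by positivity)]
          have h4 : (1:ℝ) ≤ 4 ^ j := one_le_pow₀ (by norm_num)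
          have h2 : (1:ℝ) ≤ 2 ^ j := one_le_pow₀ (by norm_num)
          have : 2 * ((4:ℝ) ^ j / (Nat.factorial j : ℝ)) * (2 ^ j * (Nat.factorial j : ℝ))
              = 2 * 4 ^ j * 2 ^ j := by field_simp
          rw [this]
          nlinarith
  have hsummB : Summable (fun j : ℕ => b n j * l ^ (2 * j)) :=
    Summable.of_nonneg_of_le
      (fun j => mul_nonneg (hb_pos j).le (by positivity)) hBle hu
  have hsummA : Summable (fun j : ℕ => (2 * (j : ℝ)) * b n j * l ^ (2 * j)) := by
    apply Summable.of_nonneg_of_le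
      (fun j => mul_nonneg (mul_nonneg (by positivity) (hb_pos j).le) (by positivity)) _ hu
    intro j
    have := hbound j l hmem
    calc (2 * (j : ℝ)) * b n j * l ^ (2 * j)
        = l * (b n j * ((2 * j : ℕ) * l ^ (2 * j - 1))) := (hA j).symm
      _ ≤ ‖b n j * ((2 * j : ℕ) * l ^ (2 * j - 1))‖ := by
          rw [Real.norm_eq_abs]
          calc l * (b n j * ((2 * j : ℕ) * l ^ (2 * j - 1)))
              ≤ 1 * (b n j * ((2 * j : ℕ) * l ^ (2 * j - 1))) := by
                apply mul_le_mul_of_nonneg_right hle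
                exact mul_nonneg (hb_pos j).le
                  (mul_nonneg (Nat.cast_nonneg _) (pow_nonneg hl.le _))
            _ = b n j * ((2 * j : ℕ) * l ^ (2 * j - 1)) := one_mul _
            _ ≤ |b n j * ((2 * j : ℕ) * l ^ (2 * j - 1))| := le_abs_self _
      _ ≤ u j := hbound j l hmem
  -- the equation ∑ 2j b_j l^{2j} = ∑ b_j l^{2j}
  have hEq : ∑' j : ℕ, (2 * (j : ℝ)) * b n j * l ^ (2 * j)
      = ∑' j : ℕ, b n j * l ^ (2 * j) := by
    rw [← tsum_congr hA, tsum_mul_left]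
    exact heq
  -- define f j = (2j - 1) b_j l^{2j}
  set f : ℕ → ℝ := fun j => (2 * (j : ℝ) - 1) * b n j * l ^ (2 * j) with hf_def
  have hfeq : ∀ j, f j = (2 * (j : ℝ)) * b n j * l ^ (2 * j) - b n j * l ^ (2 * j) := by
    intro j; rw [hf_def]; ring
  have hsummf : Summable f := by
    rw [show f = (fun j : ℕ => (2 * (j : ℝ)) * b n j * l ^ (2 * j) - b n j * l ^ (2 * j))
      from funext hfeq]
    exact hsummA.sub hsummB
  have hsumf : ∑' j, f j = 0 := by
    rw [show f = (fun j : ℕ => (2 * (j : ℝ)) * b n j * l ^ (2 * j) - b n j * l ^ (2 * j))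
      from funext hfeq, hsummA.tsum_sub hsummB, hEq, sub_self]
  have hsplit := hsummf.tsum_eq_zero_add
  rw [hsumf] at hsplit
  have hf0 : f 0 = -1 := by
    rw [hf_def]; simp [b_zero]
  rw [hf0] at hsplit
  have htail : ∑' j : ℕ, f (j + 1) = 1 := by linarith
  -- bound the tail
  have hsummtail : Summable (fun j : ℕ => f (j + 1)) :=
    (summable_nat_add_iff 1).2 hsummf
  have hgeo : Summable (fun j : ℕ => (1 / 2 : ℝ) * (1 / 4) ^ j) :=
    (summable_geometric_of_lt_one (by norm_num) (by norm_num)).mul_left _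
  have hfb : ∀ j : ℕ, f (j + 1) ≤ (1 / 2 : ℝ) * (1 / 4) ^ j := by
    intro j
    rw [hf_def]
    simp only []
    push_cast
    calc (2 * ((j : ℝ) + 1) - 1) * b n (j + 1) * l ^ (2 * (j + 1))
        ≤ (2 * ((j : ℝ) + 1) - 1) * b n (j + 1) * 1 := by
          apply mul_le_mul_of_nonneg_left (hl2 (j + 1))
          have hb := (hb_pos (j + 1)).le
          have hj : (0 : ℝ) ≤ (j : ℝ) := Nat.cast_nonneg j
          nlinarith
      _ = (2 * (j : ℝ) + 1) * b n (j + 1) := by ring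
      _ ≤ (1 / 2) * (1 / 4) ^ j := b_key hn j
  have hle23 : ∑' j : ℕ, f (j + 1) ≤ ∑' j : ℕ, (1 / 2 : ℝ) * (1 / 4) ^ j :=
    hsummtail.tsum_le_tsum hfb hgeo
  rw [htail] at hle23
  have : ∑' j : ℕ, (1 / 2 : ℝ) * (1 / 4) ^ j = 2 / 3 := by
    rw [tsum_mul_left, tsum_geometric_of_lt_one (by norm_num) (by norm_num)]
    norm_num
  rw [this] at hle23
  linarith
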